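/- Let h(H) = (α/4)‖H‖_F⁴ + (σ/2)‖H‖_F² with α ≥ 6 and σ ≥ 2‖Y‖₂ for a fixed symmetric matrix Y. Then g(H) = (1/2)‖Y − HH^T‖_F² is 1-smooth relative to h: for all H, U ∈ ℝ^{r×n}, ∇²g(H)[U,U] ≤ ∇²h(H)[U,U]. -/

import Mathlib

open Matrix

/-- Squared Frobenius norm. -/
def frobSq {r n : ℕ} (M : Matrix (Fin r) (Fin n) ℝ) : ℝ := ∑ i, ∑ j, (M i j) ^ 2


lemma quartic_hasDeriv (c0 c1 c2 c3 c4 : ℝ) (t : ℝ) :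
    HasDerivAt (fun t : ℝ => c0 + c1 * t + c2 * t ^ 2 + c3 * t ^ 3 + c4 * t ^ 4)
      (c1 + 2 * c2 * t + 3 * c3 * t ^ 2 + 4 * c4 * t ^ 3) t := by
  have h := ((((hasDerivAt_const t c0).add ((hasDerivAt_id t).const_mul c1)).add
      ((hasDerivAt_pow 2 t).const_mul c2)).add ((hasDerivAt_pow 3 t).const_mul c3)).add
      ((hasDerivAt_pow 4 t).const_mul c4)
  refine h.congr_deriv ?_
  push_cast
  ring

lemma iter2_poly (c0 c1 c2 c3 c4 : ℝ) :
    iteratedDeriv 2 (fun t : ℝ => c0 + c1 * t + c2 * t ^ 2 + c3 * t ^ 3 + c4 * t ^ 4) 0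
      = 2 * c2 := by
  have hd1 : deriv (fun t : ℝ => c0 + c1 * t + c2 * t ^ 2 + c3 * t ^ 3 + c4 * t ^ 4)
      = fun t : ℝ => c1 + 2 * c2 * t + 3 * c3 * t ^ 2 + 4 * c4 * t ^ 3 :=
    funext fun t => (quartic_hasDeriv c0 c1 c2 c3 c4 t).deriv
  have h2 : iteratedDeriv 2 (fun t : ℝ => c0 + c1 * t + c2 * t ^ 2 + c3 * t ^ 3 + c4 * t ^ 4)
      = deriv (deriv (fun t : ℝ => c0 + c1 * t + c2 * t ^ 2 + c3 * t ^ 3 + c4 * t ^ 4)) := by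
    rw [iteratedDeriv_succ, iteratedDeriv_one]
  rw [h2, hd1]
  have h3' : (fun t : ℝ => c1 + 2 * c2 * t + 3 * c3 * t ^ 2 + 4 * c4 * t ^ 3)
      = (fun t : ℝ => c1 + 2 * c2 * t + 3 * c3 * t ^ 2 + 4 * c4 * t ^ 3 + 0 * t ^ 4) :=
    funext fun t => by ring
  rw [h3', (quartic_hasDeriv c1 (2 * c2) (3 * c3) (4 * c4) 0 0).deriv]
  norm_num



lemma frob_expand {r n : ℕ} (H U : Matrix (Fin r) (Fin n) ℝ) (t : ℝ) :
    frobSq (H + t • U) = frobSq H + (∑ i, ∑ j, 2 * (H i j * U i j)) * t + frobSq U * t ^ 2 := by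
  simp only [frobSq, Matrix.add_apply, Matrix.smul_apply, smul_eq_mul]
  have e : ∀ i : Fin r, ∀ j : Fin n,
      (H i j + t * U i j) ^ 2 = H i j ^ 2 + (2 * (H i j * U i j)) * t + U i j ^ 2 * t ^ 2 :=
    fun i j => by ring
  calc ∑ i, ∑ j, (H i j + t * U i j) ^ 2
      = ∑ i, ∑ j, (H i j ^ 2 + (2 * (H i j * U i j)) * t + U i j ^ 2 * t ^ 2) :=
        Finset.sum_congr rfl fun i _ => Finset.sum_congr rfl fun j _ => e i j
    _ = _ := by
        simp only [Finset.sum_add_distrib, ← Finset.sum_mul]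

lemma entry_expand {r n : ℕ} (Y : Matrix (Fin r) (Fin r) ℝ) (H U : Matrix (Fin r) (Fin n) ℝ)
    (t : ℝ) (i j : Fin r) :
    Y i j - ∑ k, (H i k + t * U i k) * (H j k + t * U j k)
      = (Y i j - ∑ k, H i k * H j k) - (∑ k, (H i k * U j k + U i k * H j k)) * t
        - (∑ k, U i k * U j k) * t ^ 2 := by
  have e : ∑ k, (H i k + t * U i k) * (H j k + t * U j k)
      = ∑ k, (H i k * H j k + (H i k * U j k + U i k * H j k) * t + (U i k * U j k) * t ^ 2) :=
    Finset.sum_congr rfl fun k _ => by ring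
  rw [e]
  simp only [Finset.sum_add_distrib, ← Finset.sum_mul]
  ring

lemma g_poly {r n : ℕ} (Y : Matrix (Fin r) (Fin r) ℝ) (H U : Matrix (Fin r) (Fin n) ℝ) (t : ℝ) :
    (1 / 2 : ℝ) * frobSq (Y - (H + t • U) * (H + t • U)ᵀ) =
      (∑ i, ∑ j, (1 / 2) * (Y i j - ∑ k, H i k * H j k) ^ 2)
      + (∑ i, ∑ j, (-((Y i j - ∑ k, H i k * H j k)
            * (∑ k, (H i k * U j k + U i k * H j k))))) * t
      + (∑ i, ∑ j, ((1 / 2) * (∑ k, (H i k * U j k + U i k * H j k)) ^ 2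
            - (Y i j - ∑ k, H i k * H j k) * (∑ k, U i k * U j k))) * t ^ 2
      + (∑ i, ∑ j, ((∑ k, (H i k * U j k + U i k * H j k)) * (∑ k, U i k * U j k))) * t ^ 3
      + (∑ i, ∑ j, (1 / 2) * (∑ k, U i k * U j k) ^ 2) * t ^ 4 := by
  simp only [frobSq, Matrix.sub_apply, Matrix.mul_apply, Matrix.transpose_apply,
    Matrix.add_apply, Matrix.smul_apply, smul_eq_mul]
  have e : ∀ i j : Fin r,
      (1 / 2 : ℝ) * (Y i j - ∑ k, (H i k + t * U i k) * (H j k + t * U j k)) ^ 2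
      = (1 / 2) * (Y i j - ∑ k, H i k * H j k) ^ 2
        + (-((Y i j - ∑ k, H i k * H j k) * (∑ k, (H i k * U j k + U i k * H j k)))) * t
        + ((1 / 2) * (∑ k, (H i k * U j k + U i k * H j k)) ^ 2
            - (Y i j - ∑ k, H i k * H j k) * (∑ k, U i k * U j k)) * t ^ 2
        + ((∑ k, (H i k * U j k + U i k * H j k)) * (∑ k, U i k * U j k)) * t ^ 3
        + ((1 / 2) * (∑ k, U i k * U j k) ^ 2) * t ^ 4 := by
    intro i j
    rw [entry_expand Y H U t i j]
    ring
  calc (1 / 2 : ℝ) * ∑ i, ∑ j, (Y i j - ∑ k, (H i k + t * U i k) * (H j k + t * U j k)) ^ 2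
      = ∑ i, ∑ j, (1 / 2 : ℝ)
          * (Y i j - ∑ k, (H i k + t * U i k) * (H j k + t * U j k)) ^ 2 := by
        rw [Finset.mul_sum]
        exact Finset.sum_congr rfl fun i _ => Finset.mul_sum _ _ _
    _ = ∑ i, ∑ j, ((1 / 2) * (Y i j - ∑ k, H i k * H j k) ^ 2
        + (-((Y i j - ∑ k, H i k * H j k) * (∑ k, (H i k * U j k + U i k * H j k)))) * t
        + ((1 / 2) * (∑ k, (H i k * U j k + U i k * H j k)) ^ 2
            - (Y i j - ∑ k, H i k * H j k) * (∑ k, U i k * U j k)) * t ^ 2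
        + ((∑ k, (H i k * U j k + U i k * H j k)) * (∑ k, U i k * U j k)) * t ^ 3
        + ((1 / 2) * (∑ k, U i k * U j k) ^ 2) * t ^ 4) :=
        Finset.sum_congr rfl fun i _ => Finset.sum_congr rfl fun j _ => e i j
    _ = _ := by
        simp only [Finset.sum_add_distrib, ← Finset.sum_mul]



lemma sum_swap3 {r n : ℕ} (f : Fin r → Fin r → Fin n → ℝ) :
    ∑ i, ∑ j, ∑ k, f i j k = ∑ k, ∑ i, ∑ j, f i j k := by
  have s1 : ∑ i, ∑ j, ∑ k, f i j k = ∑ i, ∑ k, ∑ j, f i j k :=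
    Finset.sum_congr rfl fun i _ => Finset.sum_comm
  rw [s1]; exact Finset.sum_comm

lemma sum_swap4 {r n : ℕ} (f : Fin r → Fin r → Fin n → Fin n → ℝ) :
    ∑ i, ∑ j, ∑ k, ∑ l, f i j k l = ∑ k, ∑ l, ∑ i, ∑ j, f i j k l := by
  have s1 : ∑ i, ∑ j, ∑ k, ∑ l, f i j k l = ∑ i, ∑ k, ∑ j, ∑ l, f i j k l :=
    Finset.sum_congr rfl fun i _ => Finset.sum_comm
  have s2 : ∑ i, ∑ k, ∑ j, ∑ l, f i j k l = ∑ k, ∑ i, ∑ j, ∑ l, f i j k l :=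
    Finset.sum_comm
  have s3 : ∑ k, ∑ i, ∑ j, ∑ l, f i j k l = ∑ k, ∑ i, ∑ l, ∑ j, f i j k l :=
    Finset.sum_congr rfl fun k _ => Finset.sum_congr rfl fun i _ => Finset.sum_comm
  have s4 : ∑ k, ∑ i, ∑ l, ∑ j, f i j k l = ∑ k, ∑ l, ∑ i, ∑ j, f i j k l :=
    Finset.sum_congr rfl fun k _ => Finset.sum_comm
  rw [s1, s2, s3, s4]

lemma key_ineq {r n : ℕ} (α σ : ℝ) (Y : Matrix (Fin r) (Fin r) ℝ)
    (hα : 6 ≤ α)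
    (hσ : ∀ x : Fin r → ℝ, |∑ i, ∑ j, x i * Y i j * x j| ≤ σ / 2 * ∑ i, x i ^ 2)
    (H U : Matrix (Fin r) (Fin n) ℝ) :
    2 * (∑ i, ∑ j, ((1 / 2) * (∑ k, (H i k * U j k + U i k * H j k)) ^ 2
          - (Y i j - ∑ k, H i k * H j k) * (∑ k, U i k * U j k)))
      ≤ 2 * ((α / 4) * ((∑ i, ∑ j, 2 * (H i j * U i j)) ^ 2
          + 2 * (frobSq H * frobSq U))
          + (σ / 2) * frobSq U) := by
  set SH := frobSq H with hSHdef
  set SU := frobSq U with hSUdef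
  have hSH : 0 ≤ SH := Finset.sum_nonneg fun i _ => Finset.sum_nonneg fun j _ => sq_nonneg _
  have hSU : 0 ≤ SU := Finset.sum_nonneg fun i _ => Finset.sum_nonneg fun j _ => sq_nonneg _
  set T1 : ℝ := ∑ i, ∑ j, (∑ k, H i k * U j k) ^ 2 with hT1def
  -- Cauchy-Schwarz: T1 ≤ SH * SU
  have hT1 : T1 ≤ SH * SU := by
    have h1 : T1 ≤ ∑ i, ∑ j, (∑ k, (H i k) ^ 2) * (∑ k, (U j k) ^ 2) := by
      refine Finset.sum_le_sum fun i _ => Finset.sum_le_sum fun j _ => ?_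
      exact Finset.sum_mul_sq_le_sq_mul_sq _ _ _
    have h2 : ∑ i, ∑ j, (∑ k, (H i k) ^ 2) * (∑ k : Fin n, (U j k) ^ 2) = SH * SU := by
      rw [hSHdef, hSUdef]
      simp only [frobSq, ← Finset.mul_sum]
      rw [← Finset.sum_mul]
    linarith
  -- bound on ∑∑ B²
  have hB2 : ∑ i, ∑ j, (∑ k, (H i k * U j k + U i k * H j k)) ^ 2 ≤ 4 * (SH * SU) := by
    have hsplit : ∀ i j : Fin r, (∑ k, (H i k * U j k + U i k * H j k)) ^ 2
        = (∑ k, H i k * U j k) ^ 2 + (∑ k, H j k * U i k) ^ 2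
          + 2 * ((∑ k, H i k * U j k) * (∑ k, H j k * U i k)) := by
      intro i j
      have hb : (∑ k, (H i k * U j k + U i k * H j k))
          = (∑ k, H i k * U j k) + (∑ k, H j k * U i k) := by
        rw [Finset.sum_add_distrib]
        congr 1
        exact Finset.sum_congr rfl fun k _ => mul_comm _ _
      rw [hb]; ring
    have hswap : ∑ i, ∑ j, (∑ k, H j k * U i k) ^ 2 = T1 := Finset.sum_comm
    have hcross : ∑ i, ∑ j, 2 * ((∑ k, H i k * U j k) * (∑ k, H j k * U i k))
        ≤ ∑ i, ∑ j, ((∑ k, H i k * U j k) ^ 2 + (∑ k, H j k * U i k) ^ 2) := by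
      refine Finset.sum_le_sum fun i _ => Finset.sum_le_sum fun j _ => ?_
      nlinarith [sq_nonneg ((∑ k, H i k * U j k) - (∑ k, H j k * U i k))]
    have h2 : ∑ i, ∑ j, ((∑ k, H i k * U j k) ^ 2 + (∑ k, H j k * U i k) ^ 2)
        = T1 + T1 := by
      simp only [Finset.sum_add_distrib]
      rw [hswap, hT1def]
    calc ∑ i, ∑ j, (∑ k, (H i k * U j k + U i k * H j k)) ^ 2
        = ∑ i, ∑ j, ((∑ k, H i k * U j k) ^ 2 + (∑ k, H j k * U i k) ^ 2
            + 2 * ((∑ k, H i k * U j k) * (∑ k, H j k * U i k))) :=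
          Finset.sum_congr rfl fun i _ => Finset.sum_congr rfl fun j _ => hsplit i j
      _ = T1 + T1 + ∑ i, ∑ j, 2 * ((∑ k, H i k * U j k) * (∑ k, H j k * U i k)) := by
          simp only [Finset.sum_add_distrib]
          rw [hswap, hT1def]
      _ ≤ T1 + T1 + (T1 + T1) := by linarith [hcross.trans_eq h2]
      _ ≤ 4 * (SH * SU) := by linarith
  -- bound involving Y
  have hYC : |∑ i, ∑ j, Y i j * (∑ k, U i k * U j k)| ≤ σ / 2 * SU := by
    have hre : ∑ i, ∑ j, Y i j * (∑ k, U i k * U j k)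
        = ∑ k : Fin n, ∑ i, ∑ j, U i k * Y i j * U j k := by
      have e1 : ∑ i, ∑ j, Y i j * (∑ k, U i k * U j k)
          = ∑ i, ∑ j, ∑ k : Fin n, U i k * Y i j * U j k := by
        refine Finset.sum_congr rfl fun i _ => Finset.sum_congr rfl fun j _ => ?_
        rw [Finset.mul_sum]
        exact Finset.sum_congr rfl fun k _ => by ring
      rw [e1, sum_swap3]
    have hSUswap : ∑ k : Fin n, ∑ i, (U i k) ^ 2 = SU := by
      rw [hSUdef]; simp only [frobSq]; exact Finset.sum_comm
    calc |∑ i, ∑ j, Y i j * (∑ k, U i k * U j k)|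
        = |∑ k : Fin n, ∑ i, ∑ j, U i k * Y i j * U j k| := by rw [hre]
      _ ≤ ∑ k : Fin n, |∑ i, ∑ j, U i k * Y i j * U j k| :=
          Finset.abs_sum_le_sum_abs _ _
      _ ≤ ∑ k : Fin n, σ / 2 * ∑ i, (U i k) ^ 2 :=
          Finset.sum_le_sum fun k _ => hσ (fun i => U i k)
      _ = σ / 2 * SU := by rw [← Finset.mul_sum, hSUswap]
  -- the HHᵀ∙UUᵀ term
  have hHC : ∑ i, ∑ j, (∑ k, H i k * H j k) * (∑ k, U i k * U j k)
      = ∑ k : Fin n, ∑ l : Fin n, (∑ i, H i k * U i l) ^ 2 := by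
    have e1 : ∑ i, ∑ j, (∑ k, H i k * H j k) * (∑ k, U i k * U j k)
        = ∑ i, ∑ j, ∑ k : Fin n, ∑ l : Fin n, (H i k * U i l) * (H j k * U j l) := by
      refine Finset.sum_congr rfl fun i _ => Finset.sum_congr rfl fun j _ => ?_
      rw [Finset.sum_mul_sum]
      exact Finset.sum_congr rfl fun k _ => Finset.sum_congr rfl fun l _ => by ring
    rw [e1, sum_swap4]
    refine Finset.sum_congr rfl fun k _ => Finset.sum_congr rfl fun l _ => ?_
    rw [sq, Finset.sum_mul_sum]
  have hT2 : ∑ k : Fin n, ∑ l : Fin n, (∑ i, H i k * U i l) ^ 2 ≤ SH * SU := by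
    have h1 : ∑ k : Fin n, ∑ l : Fin n, (∑ i, H i k * U i l) ^ 2
        ≤ ∑ k : Fin n, ∑ l : Fin n, (∑ i, (H i k) ^ 2) * (∑ i, (U i l) ^ 2) := by
      refine Finset.sum_le_sum fun k _ => Finset.sum_le_sum fun l _ => ?_
      exact Finset.sum_mul_sq_le_sq_mul_sq _ _ _
    have h2 : ∑ k : Fin n, ∑ l : Fin n, (∑ i, (H i k) ^ 2) * (∑ i, (U i l) ^ 2)
        = (∑ k : Fin n, ∑ i, (H i k) ^ 2) * (∑ l : Fin n, ∑ i, (U i l) ^ 2) := by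
      simp only [← Finset.mul_sum]
      rw [← Finset.sum_mul]
    have h3 : ∑ k : Fin n, ∑ i, (H i k) ^ 2 = SH := by
      rw [hSHdef]; simp only [frobSq]; exact Finset.sum_comm
    have h4 : ∑ l : Fin n, ∑ i, (U i l) ^ 2 = SU := by
      rw [hSUdef]; simp only [frobSq]; exact Finset.sum_comm
    rw [h2, h3, h4] at h1
    exact h1
  -- split the LHS
  have hLHS : ∑ i, ∑ j, ((1 / 2 : ℝ) * (∑ k, (H i k * U j k + U i k * H j k)) ^ 2
        - (Y i j - ∑ k, H i k * H j k) * (∑ k, U i k * U j k))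
      = (1 / 2) * (∑ i, ∑ j, (∑ k, (H i k * U j k + U i k * H j k)) ^ 2)
        - (∑ i, ∑ j, Y i j * (∑ k, U i k * U j k))
        + (∑ i, ∑ j, (∑ k, H i k * H j k) * (∑ k, U i k * U j k)) := by
    have e : ∀ i j : Fin r, (1 / 2 : ℝ) * (∑ k, (H i k * U j k + U i k * H j k)) ^ 2
        - (Y i j - ∑ k, H i k * H j k) * (∑ k, U i k * U j k)
        = (1 / 2) * (∑ k, (H i k * U j k + U i k * H j k)) ^ 2
          - Y i j * (∑ k, U i k * U j k)
          + (∑ k, H i k * H j k) * (∑ k, U i k * U j k) := fun i j => by ring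
    calc ∑ i, ∑ j, ((1 / 2 : ℝ) * (∑ k, (H i k * U j k + U i k * H j k)) ^ 2
          - (Y i j - ∑ k, H i k * H j k) * (∑ k, U i k * U j k))
        = ∑ i, ∑ j, ((1 / 2 : ℝ) * (∑ k, (H i k * U j k + U i k * H j k)) ^ 2
          - Y i j * (∑ k, U i k * U j k)
          + (∑ k, H i k * H j k) * (∑ k, U i k * U j k)) :=
          Finset.sum_congr rfl fun i _ => Finset.sum_congr rfl fun j _ => e i j
      _ = _ := by
          simp only [Finset.sum_add_distrib, Finset.sum_sub_distrib, ← Finset.mul_sum]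
  rw [hLHS, hHC]
  have habs := abs_le.mp hYC
  nlinarith [sq_nonneg (∑ i, ∑ j, 2 * (H i j * U i j)), mul_nonneg hSH hSU,
    mul_nonneg (mul_nonneg (by linarith : (0:ℝ) ≤ α - 6) hSH) hSU, hT2, hB2, habs.1]


theorem stmt14 {r n : ℕ} (α σ : ℝ) (Y : Matrix (Fin r) (Fin r) ℝ) (hY : Y.IsSymm)
    (hα : 6 ≤ α)
    -- σ ≥ 2‖Y‖₂ : the spectral norm of the symmetric matrix Y, expressed via quadratic forms
    (hσ : ∀ x : Fin r → ℝ, |∑ i, ∑ j, x i * Y i j * x j| ≤ (σ / 2) * ∑ i, (x i) ^ 2) :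
    letI h : Matrix (Fin r) (Fin n) ℝ → ℝ := fun H =>
      (α / 4) * (frobSq H) ^ 2 + (σ / 2) * frobSq H
    letI g : Matrix (Fin r) (Fin n) ℝ → ℝ := fun H => (1 / 2) * frobSq (Y - H * Hᵀ)
    ∀ H U : Matrix (Fin r) (Fin n) ℝ,
      iteratedDeriv 2 (fun t : ℝ => g (H + t • U)) 0 ≤
        iteratedDeriv 2 (fun t : ℝ => h (H + t • U)) 0 := by
  intro H U
  show iteratedDeriv 2 (fun t : ℝ => (1 / 2) * frobSq (Y - (H + t • U) * (H + t • U)ᵀ)) 0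
      ≤ iteratedDeriv 2 (fun t : ℝ =>
          (α / 4) * (frobSq (H + t • U)) ^ 2 + (σ / 2) * frobSq (H + t • U)) 0
  have hg : (fun t : ℝ => (1 / 2 : ℝ) * frobSq (Y - (H + t • U) * (H + t • U)ᵀ))
      = fun t : ℝ =>
        (∑ i, ∑ j, (1 / 2) * (Y i j - ∑ k, H i k * H j k) ^ 2)
        + (∑ i, ∑ j, (-((Y i j - ∑ k, H i k * H j k)
              * (∑ k, (H i k * U j k + U i k * H j k))))) * t
        + (∑ i, ∑ j, ((1 / 2) * (∑ k, (H i k * U j k + U i k * H j k)) ^ 2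
              - (Y i j - ∑ k, H i k * H j k) * (∑ k, U i k * U j k))) * t ^ 2
        + (∑ i, ∑ j, ((∑ k, (H i k * U j k + U i k * H j k)) * (∑ k, U i k * U j k))) * t ^ 3
        + (∑ i, ∑ j, (1 / 2) * (∑ k, U i k * U j k) ^ 2) * t ^ 4 :=
    funext fun t => g_poly Y H U t
  have hh : (fun t : ℝ => (α / 4) * (frobSq (H + t • U)) ^ 2 + (σ / 2) * frobSq (H + t • U))
      = fun t : ℝ =>
        ((α / 4) * (frobSq H) ^ 2 + (σ / 2) * frobSq H)
        + ((α / 4) * (2 * (frobSq H * (∑ i, ∑ j, 2 * (H i j * U i j))))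
            + (σ / 2) * (∑ i, ∑ j, 2 * (H i j * U i j))) * t
        + ((α / 4) * ((∑ i, ∑ j, 2 * (H i j * U i j)) ^ 2 + 2 * (frobSq H * frobSq U))
            + (σ / 2) * frobSq U) * t ^ 2
        + ((α / 4) * (2 * ((∑ i, ∑ j, 2 * (H i j * U i j)) * frobSq U))) * t ^ 3
        + ((α / 4) * (frobSq U) ^ 2) * t ^ 4 :=
    funext fun t => by rw [frob_expand H U t]; ring
  rw [hg, hh, iter2_poly, iter2_poly]
  exact key_ineq α σ Y hα hσ H U
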